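/- Let R be a ring and let E be a cochain complex of R-modules indexed by ℤ. Let N be a decreasing filtration of E by subcomplexes N^i E (so N^{i+1}E ⊆ N^i E for all i), which is finite: there exist integers a ≤ b with N^a E = E and N^b E = 0. Assume that for every integer m, the quotient complex Gr^{-m}E := N^{-m}E / N^{-m+1}E satisfies H^i(Gr^{-m}E) = 0 for every i ≠ m. For a cochain complex C, let T^i C denote the subcomplex with (T^i C)^q = C^q for q ≤ −i, (T^i C)^{−i+1} = image of the differential d : C^{−i} → C^{−i+1}, and (T^i C)^q = 0 for q > −i+1; and set T_N^i E := T^i(N^i E), a subcomplex of both N^i E and T^i E. Then for every integer i, the inclusion T_N^i E ⊆ N^i E is a quasi-isomorphism and the inclusion T_N^i E ⊆ T^i E is a quasi-isomorphism; that is, the morphisms of filtered complexes (E, N) ← (E, T_N) → (E, T) are filtered quasi-isomorphisms. -/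

import Mathlib

open CategoryTheory Limits

namespace FilteredTruncation

variable {R : Type*} [Ring R]

/-- The subcomplex of a cochain complex `K` of `R`-modules determined by a family of
`d`-stable submodules `S q ⊆ K^q`. -/
noncomputable def subcomplex (K : CochainComplex (ModuleCat R) ℤ)
    (S : ∀ q : ℤ, Submodule R (K.X q))
    (hS : ∀ (q j : ℤ) (x : K.X q), x ∈ S q → ((K.d q j).hom : K.X q →ₗ[R] K.X j) x ∈ S j) :
    CochainComplex (ModuleCat R) ℤ where
  X q := ModuleCat.of R ↥(S q)
  d i j := ModuleCat.ofHom (((K.d i j).hom : K.X i →ₗ[R] K.X j).restrict (fun x hx => hS i j x hx))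
  shape i j h := by
    ext x
    show ((K.d i j).hom : K.X i →ₗ[R] K.X j) x.1 = 0
    rw [K.shape i j h]; rfl
  d_comp_d' i j k _ _ := by
    ext x
    have h0 : ((K.d j k).hom : K.X j →ₗ[R] K.X k) ∘ₗ ((K.d i j).hom : K.X i →ₗ[R] K.X j) = 0 := by
      rw [← ModuleCat.hom_comp, K.d_comp_d]; rfl
    exact LinearMap.congr_fun h0 x.1

/-- The inclusion morphism between the subcomplexes determined by families of
submodules `S q ≤ T q`. -/
noncomputable def subcomplexIncl (K : CochainComplex (ModuleCat R) ℤ)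
    (S T : ∀ q : ℤ, Submodule R (K.X q))
    (hS : ∀ (q j : ℤ) (x : K.X q), x ∈ S q → ((K.d q j).hom : K.X q →ₗ[R] K.X j) x ∈ S j)
    (hT : ∀ (q j : ℤ) (x : K.X q), x ∈ T q → ((K.d q j).hom : K.X q →ₗ[R] K.X j) x ∈ T j)
    (hle : ∀ q : ℤ, S q ≤ T q) : subcomplex K S hS ⟶ subcomplex K T hT where
  f q := ModuleCat.ofHom (Submodule.inclusion (hle q))
  comm' i j _ := by
    ext x
    exact Subtype.ext rfl

/-- The truncation subcomplex `T^i K`: all of `K` in degrees `≤ -i`, the image of the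
differential in degree `-i + 1`, and `0` above. -/
noncomputable def tau (K : CochainComplex (ModuleCat R) ℤ) (i q : ℤ) :
    Submodule R (K.X q) :=
  if q ≤ -i then ⊤
  else if q = -i + 1 then LinearMap.range ((K.d (-i) q).hom : K.X (-i) →ₗ[R] K.X q)
  else ⊥

/-- The subcomplex `T_N^i K := T^i (N^i K)`: `N^i K` in degrees `≤ -i`, the image of
`N^i K^{-i}` under the differential in degree `-i + 1`, and `0` above. -/
noncomputable def tauN (K : CochainComplex (ModuleCat R) ℤ)
    (N : ℤ → ∀ q : ℤ, Submodule R (K.X q)) (i q : ℤ) : Submodule R (K.X q) :=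
  if q ≤ -i then N i q
  else if q = -i + 1 then
    Submodule.map ((K.d (-i) q).hom : K.X (-i) →ₗ[R] K.X q) (N i (-i))
  else ⊥

lemma d_mem_of_shape (K : CochainComplex (ModuleCat R) ℤ) {q j : ℤ} (h : ¬ q + 1 = j)
    (x : K.X q) (S : Submodule R (K.X j)) : ((K.d q j).hom : K.X q →ₗ[R] K.X j) x ∈ S := by
  have h0 : K.d q j = 0 := K.shape q j h
  have hz : ((K.d q j).hom : K.X q →ₗ[R] K.X j) x = 0 := by rw [h0]; rfl
  rw [hz]
  exact S.zero_mem

lemma tau_stable (K : CochainComplex (ModuleCat R) ℤ) (i : ℤ) :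
    ∀ (q j : ℤ) (x : K.X q), x ∈ tau K i q →
      ((K.d q j).hom : K.X q →ₗ[R] K.X j) x ∈ tau K i j := by
  intro q j x hx
  by_cases hrel : q + 1 = j
  · subst hrel
    by_cases h1 : q ≤ -i
    · by_cases h2 : q + 1 ≤ -i
      · rw [tau, if_pos h2]; exact Submodule.mem_top
      · have h4 : q = -i := by omega
        subst h4
        rw [tau, if_neg h2, if_pos (by omega)]
        exact LinearMap.mem_range_self _ x
    · rw [tau, if_neg h1] at hx
      by_cases h2 : q = -i + 1
      · rw [if_pos h2] at hx
        obtain ⟨y, hy⟩ := hx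
        have h0 : ((K.d q (q + 1)).hom : K.X q →ₗ[R] K.X (q + 1)) ∘ₗ
            ((K.d (-i) q).hom : K.X (-i) →ₗ[R] K.X q) = 0 := by
            rw [← ModuleCat.hom_comp, K.d_comp_d]; rfl
        have hz : ((K.d q (q + 1)).hom : K.X q →ₗ[R] K.X (q + 1)) x = 0 := by
          rw [← hy]
          exact LinearMap.congr_fun h0 y
        rw [hz]
        exact Submodule.zero_mem _
      · rw [if_neg h2] at hx
        have hx0 : x = 0 := (Submodule.mem_bot _).mp hx
        rw [hx0, map_zero]
        exact Submodule.zero_mem _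
  · exact d_mem_of_shape K hrel x _

lemma tauN_stable (K : CochainComplex (ModuleCat R) ℤ)
    (N : ℤ → ∀ q : ℤ, Submodule R (K.X q))
    (hNd : ∀ (i q j : ℤ) (x : K.X q), x ∈ N i q →
      ((K.d q j).hom : K.X q →ₗ[R] K.X j) x ∈ N i j) (i : ℤ) :
    ∀ (q j : ℤ) (x : K.X q), x ∈ tauN K N i q →
      ((K.d q j).hom : K.X q →ₗ[R] K.X j) x ∈ tauN K N i j := by
  intro q j x hx
  by_cases hrel : q + 1 = j
  · subst hrel
    by_cases h1 : q ≤ -i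
    · rw [tauN, if_pos h1] at hx
      by_cases h2 : q + 1 ≤ -i
      · rw [tauN, if_pos h2]
        exact hNd i q (q + 1) x hx
      · have h4 : q = -i := by omega
        subst h4
        rw [tauN, if_neg h2, if_pos (by omega)]
        exact Submodule.mem_map_of_mem hx
    · rw [tauN, if_neg h1] at hx
      by_cases h2 : q = -i + 1
      · rw [if_pos h2] at hx
        obtain ⟨y, _, hy⟩ := hx
        have h0 : ((K.d q (q + 1)).hom : K.X q →ₗ[R] K.X (q + 1)) ∘ₗ
            ((K.d (-i) q).hom : K.X (-i) →ₗ[R] K.X q) = 0 := by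
            rw [← ModuleCat.hom_comp, K.d_comp_d]; rfl
        have hz : ((K.d q (q + 1)).hom : K.X q →ₗ[R] K.X (q + 1)) x = 0 := by
          rw [← hy]
          exact LinearMap.congr_fun h0 y
        rw [hz]
        exact Submodule.zero_mem _
      · rw [if_neg h2] at hx
        have hx0 : x = 0 := (Submodule.mem_bot _).mp hx
        rw [hx0, map_zero]
        exact Submodule.zero_mem _
  · exact d_mem_of_shape K hrel x _

lemma tauN_le_N (K : CochainComplex (ModuleCat R) ℤ)
    (N : ℤ → ∀ q : ℤ, Submodule R (K.X q))
    (hNd : ∀ (i q j : ℤ) (x : K.X q), x ∈ N i q →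
      ((K.d q j).hom : K.X q →ₗ[R] K.X j) x ∈ N i j) (i : ℤ) :
    ∀ q : ℤ, tauN K N i q ≤ N i q := by
  intro q x hx
  rw [tauN] at hx
  by_cases h1 : q ≤ -i
  · rw [if_pos h1] at hx; exact hx
  · rw [if_neg h1] at hx
    by_cases h2 : q = -i + 1
    · rw [if_pos h2] at hx
      obtain ⟨y, hy, hxy⟩ := hx
      rw [← hxy]
      exact hNd i (-i) q y hy
    · rw [if_neg h2] at hx
      have hx0 : x = 0 := (Submodule.mem_bot _).mp hx
      rw [hx0]; exact Submodule.zero_mem _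

lemma tauN_le_tau (K : CochainComplex (ModuleCat R) ℤ)
    (N : ℤ → ∀ q : ℤ, Submodule R (K.X q)) (i : ℤ) :
    ∀ q : ℤ, tauN K N i q ≤ tau K i q := by
  intro q x hx
  rw [tauN] at hx
  rw [tau]
  by_cases h1 : q ≤ -i
  · rw [if_pos h1]; exact Submodule.mem_top
  · rw [if_neg h1] at hx ⊢
    by_cases h2 : q = -i + 1
    · rw [if_pos h2] at hx ⊢
      exact LinearMap.map_le_range hx
    · rwa [if_neg h2] at hx ⊢

section Criterion

lemma shortComplex_quasiIso_of {S₁ S₂ : ShortComplex (ModuleCat R)} (φ : S₁ ⟶ S₂)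
    (surj : ∀ y : S₂.X₂, S₂.g y = 0 → ∃ x : S₁.X₂, S₁.g x = 0 ∧
      ∃ b : S₂.X₁, φ.τ₂ x - y = S₂.f b)
    (inj : ∀ x : S₁.X₂, S₁.g x = 0 → (∃ b : S₂.X₁, φ.τ₂ x = S₂.f b) →
      ∃ a : S₁.X₁, x = S₁.f a) :
    ShortComplex.QuasiIso φ := by
  have hτ : ∀ x : S₁.X₂, S₁.g x = 0 → S₂.g (φ.τ₂ x) = 0 := by
    intro x hx
    have h := LinearMap.congr_fun (congrArg ModuleCat.Hom.hom φ.comm₂₃) x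
    have h' : S₂.g (φ.τ₂ x) = φ.τ₃ (S₁.g x) := h
    rw [h', hx, map_zero]
  let φK : ↥(LinearMap.ker ((S₁.g).hom : S₁.X₂ →ₗ[R] S₁.X₃)) →ₗ[R]
      ↥(LinearMap.ker ((S₂.g).hom : S₂.X₂ →ₗ[R] S₂.X₃)) :=
    ((φ.τ₂).hom : S₁.X₂ →ₗ[R] S₂.X₂).restrict
      (fun x hx => LinearMap.mem_ker.2 (hτ x (LinearMap.mem_ker.1 hx)))
  have hmapq : LinearMap.range S₁.moduleCatToCycles ≤
      (LinearMap.range S₂.moduleCatToCycles).comap φK := by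
    rintro _ ⟨a, rfl⟩
    refine ⟨φ.τ₁ a, Subtype.ext ?_⟩
    exact (LinearMap.congr_fun (congrArg ModuleCat.Hom.hom φ.comm₁₂) a)
  let φH := Submodule.mapQ _ _ φK hmapq
  let γ : ShortComplex.LeftHomologyMapData φ S₁.moduleCatLeftHomologyData
      S₂.moduleCatLeftHomologyData :=
    { φK := ModuleCat.ofHom φK
      φH := ModuleCat.ofHom φH
      commi := by ext x; rfl
      commf' := by
        ext a
        exact Subtype.ext (LinearMap.congr_fun (congrArg ModuleCat.Hom.hom φ.comm₁₂) a).symm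
      commπ := by
        ext x
        rfl }
  have hinj : Function.Injective φH := by
    rw [← LinearMap.ker_eq_bot, Submodule.eq_bot_iff]
    intro w hw
    obtain ⟨x, rfl⟩ := Submodule.Quotient.mk_surjective _ w
    rw [LinearMap.mem_ker, Submodule.mapQ_apply, Submodule.Quotient.mk_eq_zero] at hw
    obtain ⟨b, hb⟩ := hw
    obtain ⟨a, ha⟩ := inj x.1 (LinearMap.mem_ker.1 x.2)
      ⟨b, (congrArg Subtype.val hb).symm⟩
    rw [Submodule.Quotient.mk_eq_zero]
    exact ⟨a, Subtype.ext ha.symm⟩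
  have hsurj : Function.Surjective φH := by
    intro w
    obtain ⟨y, rfl⟩ := Submodule.Quotient.mk_surjective _ w
    obtain ⟨x, hx, b, hb⟩ := surj y.1 (LinearMap.mem_ker.1 y.2)
    refine ⟨Submodule.Quotient.mk ⟨x, LinearMap.mem_ker.2 hx⟩, ?_⟩
    rw [Submodule.mapQ_apply]
    exact (Submodule.Quotient.eq _).2 ⟨b, Subtype.ext hb.symm⟩
  rw [ShortComplex.quasiIso_iff, γ.homologyMap_eq]
  have : IsIso γ.φH := (ConcreteCategory.isIso_iff_bijective γ.φH).2 ⟨hinj, hsurj⟩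
  infer_instance

lemma quasiIsoAt_of_elementwise {A B : CochainComplex (ModuleCat R) ℤ} (φ : A ⟶ B) (p : ℤ)
    (surj : ∀ y : B.X p, ((B.d p (p+1)).hom : B.X p →ₗ[R] B.X (p+1)) y = 0 →
      ∃ x : A.X p, ((A.d p (p+1)).hom : A.X p →ₗ[R] A.X (p+1)) x = 0 ∧
      ∃ b : B.X (p-1), ((φ.f p).hom : A.X p →ₗ[R] B.X p) x - y =
        ((B.d (p-1) p).hom : B.X (p-1) →ₗ[R] B.X p) b)
    (inj : ∀ x : A.X p, ((A.d p (p+1)).hom : A.X p →ₗ[R] A.X (p+1)) x = 0 →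
      (∃ b : B.X (p-1), ((φ.f p).hom : A.X p →ₗ[R] B.X p) x =
        ((B.d (p-1) p).hom : B.X (p-1) →ₗ[R] B.X p) b) →
      ∃ a : A.X (p-1), x = ((A.d (p-1) p).hom : A.X (p-1) →ₗ[R] A.X p) a) :
    QuasiIsoAt φ p := by
  rw [quasiIsoAt_iff' φ (p-1) p (p+1) (CochainComplex.prev ℤ p) (CochainComplex.next ℤ p)]
  exact shortComplex_quasiIso_of _ surj inj

end Criterion

section Filtration

lemma N_anti {K : CochainComplex (ModuleCat R) ℤ}
    {N : ℤ → ∀ q : ℤ, Submodule R (K.X q)}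
    (hdec : ∀ i q : ℤ, N (i + 1) q ≤ N i q) :
    ∀ {i j : ℤ}, i ≤ j → ∀ q, N j q ≤ N i q := by
  intro i j h q
  refine Int.le_induction (motive := fun j _ => N j q ≤ N i q) ?_ ?_ j h
  · exact le_rfl
  · intro j _ ih
    exact le_trans (hdec j q) ih

lemma cast_apply_d (K : CochainComplex (ModuleCat R) ℤ) {q q' : ℤ} (e : q = q') (j : ℤ)
    (w : K.X q) :
    ((K.d q' j).hom : K.X q' →ₗ[R] K.X j) (e ▸ w) = ((K.d q j).hom : K.X q →ₗ[R] K.X j) w := by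
  subst e; rfl

lemma cast_mem (K : CochainComplex (ModuleCat R) ℤ) {q q' : ℤ} (e : q = q')
    (S : ∀ r : ℤ, Submodule R (K.X r)) {w : K.X q} (hw : w ∈ S q) :
    (e ▸ w : K.X q') ∈ S q' := by subst e; exact hw

lemma d_d_zero (K : CochainComplex (ModuleCat R) ℤ) (i j k : ℤ) (x : K.X i) :
    ((K.d j k).hom : K.X j →ₗ[R] K.X k) (((K.d i j).hom : K.X i →ₗ[R] K.X j) x) = 0 := by
  have h0 : ((K.d j k).hom : K.X j →ₗ[R] K.X k) ∘ₗ ((K.d i j).hom : K.X i →ₗ[R] K.X j) = 0 := by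
    rw [← ModuleCat.hom_comp, K.d_comp_d]; rfl
  exact LinearMap.congr_fun h0 x

/-- Cocycles of `N^i E` in degrees above `-i` are coboundaries of `N^i E`. -/
lemma acyclic_above {K : CochainComplex (ModuleCat R) ℤ}
    {N : ℤ → ∀ q : ℤ, Submodule R (K.X q)}
    (hdec : ∀ i q : ℤ, N (i + 1) q ≤ N i q)
    {b : ℤ} (hbot : ∀ q : ℤ, N b q = ⊥)
    (hGr : ∀ m q : ℤ, q + 1 ≠ m → ∀ x : K.X (q + 1), x ∈ N (-m) (q + 1) →
      ((K.d (q + 1) (q + 2)).hom : K.X (q + 1) →ₗ[R] K.X (q + 2)) x ∈ N (-m + 1) (q + 2) →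
      ∃ y ∈ N (-m) q,
        x - ((K.d q (q + 1)).hom : K.X q →ₗ[R] K.X (q + 1)) y ∈ N (-m + 1) (q + 1)) :
    ∀ i p : ℤ, -i < p → ∀ x : K.X p, x ∈ N i p →
      ((K.d p (p + 1)).hom : K.X p →ₗ[R] K.X (p + 1)) x = 0 →
      ∃ y ∈ N i (p - 1), ((K.d (p - 1) p).hom : K.X (p - 1) →ₗ[R] K.X p) y = x := by
  suffices h : ∀ n : ℕ, ∀ i : ℤ, b - n ≤ i → ∀ p : ℤ, -i < p → ∀ x : K.X p, x ∈ N i p →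
      ((K.d p (p + 1)).hom : K.X p →ₗ[R] K.X (p + 1)) x = 0 →
      ∃ y ∈ N i (p - 1), ((K.d (p - 1) p).hom : K.X (p - 1) →ₗ[R] K.X p) y = x by
    intro i
    exact h (b - i).toNat i (by omega)
  intro n
  induction n with
  | zero =>
    intro i hi p _ x hx _
    have hx0 : x = 0 := by
      have := N_anti hdec (show b ≤ i by omega) p hx
      rw [hbot p] at this
      exact (Submodule.mem_bot _).1 this
    exact ⟨0, Submodule.zero_mem _, by rw [map_zero, hx0]⟩
  | succ n ih =>
    intro i hi p hp x hx hdx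
    by_cases hbn : b - n ≤ i
    · exact ih i hbn p hp x hx hdx
    · have hGr' := hGr (-i) (p - 1)
      rw [show p - 1 + 1 = p by omega, show p - 1 + 2 = p + 1 by omega,
        show -(-i) + 1 = i + 1 by omega, show -(-i) = i by omega] at hGr'
      obtain ⟨y, hy, hxy⟩ := hGr' (by omega) x hx (by rw [hdx]; exact Submodule.zero_mem _)
      set x' := x - ((K.d (p - 1) p).hom : K.X (p - 1) →ₗ[R] K.X p) y with hx'def
      have hdx' : ((K.d p (p + 1)).hom : K.X p →ₗ[R] K.X (p + 1)) x' = 0 := by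
        rw [hx'def, map_sub, hdx, d_d_zero, sub_zero]
      obtain ⟨z, hz, hzd⟩ := ih (i + 1) (by omega) p (by omega) x' hxy hdx'
      refine ⟨y + z, Submodule.add_mem _ hy (hdec i (p - 1) hz), ?_⟩
      rw [map_add, hzd, hx'def]
      abel

/-- Coacyclicity of the quotient `E / N^i E` in degrees `≤ -i`. -/
lemma quot_acyclic {K : CochainComplex (ModuleCat R) ℤ}
    {N : ℤ → ∀ q : ℤ, Submodule R (K.X q)}
    (hdec : ∀ i q : ℤ, N (i + 1) q ≤ N i q)
    {a : ℤ} (htop : ∀ q : ℤ, N a q = ⊤)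
    (hGr : ∀ m q : ℤ, q + 1 ≠ m → ∀ x : K.X (q + 1), x ∈ N (-m) (q + 1) →
      ((K.d (q + 1) (q + 2)).hom : K.X (q + 1) →ₗ[R] K.X (q + 2)) x ∈ N (-m + 1) (q + 2) →
      ∃ y ∈ N (-m) q,
        x - ((K.d q (q + 1)).hom : K.X q →ₗ[R] K.X (q + 1)) y ∈ N (-m + 1) (q + 1)) :
    ∀ i p : ℤ, p ≤ -i → ∀ x : K.X p,
      ((K.d p (p + 1)).hom : K.X p →ₗ[R] K.X (p + 1)) x ∈ N i (p + 1) →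
      ∃ y : K.X (p - 1), x - ((K.d (p - 1) p).hom : K.X (p - 1) →ₗ[R] K.X p) y ∈ N i p := by
  suffices h : ∀ n : ℕ, ∀ i : ℤ, i ≤ a + n → ∀ p : ℤ, p ≤ -i → ∀ x : K.X p,
      ((K.d p (p + 1)).hom : K.X p →ₗ[R] K.X (p + 1)) x ∈ N i (p + 1) →
      ∃ y : K.X (p - 1), x - ((K.d (p - 1) p).hom : K.X (p - 1) →ₗ[R] K.X p) y ∈ N i p by
    intro i
    exact h (i - a).toNat i (by omega)
  intro n
  induction n with
  | zero =>
    intro i hi p _ x _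
    refine ⟨0, ?_⟩
    have : N a p ≤ N i p := N_anti hdec (by omega) p
    rw [htop p] at this
    exact this Submodule.mem_top
  | succ n ih =>
    intro i hi p hp x hdx
    by_cases han : i ≤ a + n
    · exact ih i han p hp x hdx
    · have hi1 : i - 1 ≤ a + n := by omega
      have hNle : ∀ q, N i q ≤ N (i - 1) q := by
        intro q
        have := hdec (i - 1) q
        rwa [show i - 1 + 1 = i by omega] at this
      obtain ⟨y, hy⟩ := ih (i - 1) hi1 p (by omega) x (hNle (p + 1) hdx)
      set x' := x - ((K.d (p - 1) p).hom : K.X (p - 1) →ₗ[R] K.X p) y with hx'def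
      have hGr' := hGr (1 - i) (p - 1)
      rw [show p - 1 + 1 = p by omega, show p - 1 + 2 = p + 1 by omega,
        show -(1 - i) + 1 = i by omega, show -(1 - i) = i - 1 by omega] at hGr'
      have hdx' : ((K.d p (p + 1)).hom : K.X p →ₗ[R] K.X (p + 1)) x' ∈ N i (p + 1) := by
        rw [hx'def, map_sub, d_d_zero, sub_zero]
        exact hdx
      obtain ⟨z, hz, hzd⟩ := hGr' (by omega) x' hy hdx'
      refine ⟨y + z, ?_⟩
      rw [map_add]
      have : x - (((K.d (p - 1) p).hom : K.X (p - 1) →ₗ[R] K.X p) y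
          + ((K.d (p - 1) p).hom : K.X (p - 1) →ₗ[R] K.X p) z)
          = x' - ((K.d (p - 1) p).hom : K.X (p - 1) →ₗ[R] K.X p) z := by
        rw [hx'def]; abel
      rw [this]
      exact hzd

end Filtration


/-- Let `E` be a cochain complex of `R`-modules, with a finite decreasing filtration
`N` by subcomplexes, such that `H^i(Gr^{-m} E) = 0` for `i ≠ m` (stated elementwise:
every cocycle of `N^{-m}E/N^{-m+1}E` in degree `≠ m` is a coboundary).  Then for every
`i` the inclusions `T_N^i E ⊆ N^i E` and `T_N^i E ⊆ T^i E` are quasi-isomorphisms. -/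
theorem quasiIso_tauN_incl
    (R : Type*) [Ring R] (K : CochainComplex (ModuleCat R) ℤ)
    (N : ℤ → ∀ q : ℤ, Submodule R (K.X q))
    (hNd : ∀ (i q j : ℤ) (x : K.X q), x ∈ N i q →
      ((K.d q j).hom : K.X q →ₗ[R] K.X j) x ∈ N i j)
    (hdec : ∀ i q : ℤ, N (i + 1) q ≤ N i q)
    (hfin : ∃ a b : ℤ, a ≤ b ∧ (∀ q : ℤ, N a q = ⊤) ∧ (∀ q : ℤ, N b q = ⊥))
    (hGr : ∀ m q : ℤ, q + 1 ≠ m → ∀ x : K.X (q + 1), x ∈ N (-m) (q + 1) →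
      ((K.d (q + 1) (q + 2)).hom : K.X (q + 1) →ₗ[R] K.X (q + 2)) x ∈ N (-m + 1) (q + 2) →
      ∃ y ∈ N (-m) q,
        x - ((K.d q (q + 1)).hom : K.X q →ₗ[R] K.X (q + 1)) y ∈ N (-m + 1) (q + 1)) :
    ∀ i : ℤ,
      QuasiIso (subcomplexIncl K (tauN K N i) (N i)
        (tauN_stable K N hNd i) (hNd i) (tauN_le_N K N hNd i)) ∧
      QuasiIso (subcomplexIncl K (tauN K N i) (tau K i)
        (tauN_stable K N hNd i) (tau_stable K i) (tauN_le_tau K N i)) := by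
  obtain ⟨a, b, hab, htop, hbot⟩ := hfin
  have hA := acyclic_above hdec hbot hGr
  have hB := quot_acyclic hdec htop hGr
  intro i
  constructor
  · rw [quasiIso_iff]
    intro p
    apply quasiIsoAt_of_elementwise
    · -- surjectivity on cohomology
      intro y hy
      have hy' : ((K.d p (p + 1)).hom : K.X p →ₗ[R] K.X (p + 1)) y.1 = 0 :=
        congrArg Subtype.val hy
      by_cases h1 : p ≤ -i
      · have hmem : y.1 ∈ tauN K N i p := by
          rw [tauN, if_pos h1]; exact y.2
        refine ⟨⟨y.1, hmem⟩, Subtype.ext hy', 0, Subtype.ext ?_⟩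
        show y.1 - y.1 = ((K.d (p - 1) p).hom : K.X (p - 1) →ₗ[R] K.X p) 0
        rw [map_zero, sub_self]
      · obtain ⟨z, hz, hzd⟩ := hA i p (by omega) y.1 y.2 hy'
        refine ⟨0, by rw [map_zero], ⟨-z, Submodule.neg_mem _ hz⟩, Subtype.ext ?_⟩
        show (0 : K.X p) - y.1 = ((K.d (p - 1) p).hom : K.X (p - 1) →ₗ[R] K.X p) (-z)
        rw [map_neg, hzd]
        abel
    · -- injectivity on cohomology
      rintro x hx ⟨c, hc⟩
      have hc' : x.1 = ((K.d (p - 1) p).hom : K.X (p - 1) →ₗ[R] K.X p) c.1 :=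
        congrArg Subtype.val hc
      by_cases h1 : p ≤ -i + 1
      · have hmem : c.1 ∈ tauN K N i (p - 1) := by
          rw [tauN, if_pos (show p - 1 ≤ -i by omega)]; exact c.2
        exact ⟨⟨c.1, hmem⟩, Subtype.ext hc'⟩
      · have heq : tauN K N i p = ⊥ := by
          rw [tauN, if_neg (show ¬ p ≤ -i by omega),
            if_neg (show ¬ p = -i + 1 by omega)]
        have hx0 : x.1 = 0 := (Submodule.mem_bot _).1 (heq.le x.2)
        exact ⟨0, by rw [map_zero]; exact Subtype.ext hx0⟩
  · rw [quasiIso_iff]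
    intro p
    apply quasiIsoAt_of_elementwise
    · -- surjectivity on cohomology
      intro y hy
      have hy' : ((K.d p (p + 1)).hom : K.X p →ₗ[R] K.X (p + 1)) y.1 = 0 :=
        congrArg Subtype.val hy
      by_cases h1 : p ≤ -i
      · obtain ⟨w, hw⟩ := hB i p h1 y.1 (by rw [hy']; exact Submodule.zero_mem _)
        have hmem : y.1 - ((K.d (p - 1) p).hom : K.X (p - 1) →ₗ[R] K.X p) w ∈ tauN K N i p := by
          rw [tauN, if_pos h1]; exact hw
        have hmem2 : -w ∈ tau K i (p - 1) := by
          rw [tau, if_pos (show p - 1 ≤ -i by omega)]; exact Submodule.mem_top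
        refine ⟨⟨_, hmem⟩, Subtype.ext ?_, ⟨-w, hmem2⟩, Subtype.ext ?_⟩
        · show ((K.d p (p + 1)).hom : K.X p →ₗ[R] K.X (p + 1))
            (y.1 - ((K.d (p - 1) p).hom : K.X (p - 1) →ₗ[R] K.X p) w) = 0
          rw [map_sub, hy', d_d_zero, sub_zero]
        · show (y.1 - ((K.d (p - 1) p).hom : K.X (p - 1) →ₗ[R] K.X p) w) - y.1
            = ((K.d (p - 1) p).hom : K.X (p - 1) →ₗ[R] K.X p) (-w)
          rw [map_neg]
          abel
      · by_cases h2 : p = -i + 1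
        · have heq : tau K i p = LinearMap.range ((K.d (-i) p).hom : K.X (-i) →ₗ[R] K.X p) := by
            rw [tau, if_neg h1, if_pos h2]
          obtain ⟨w, hw⟩ := heq.le y.2
          have e : (-i : ℤ) = p - 1 := by omega
          have hmem2 : (e ▸ (-w) : K.X (p - 1)) ∈ tau K i (p - 1) := by
            rw [tau, if_pos (show p - 1 ≤ -i by omega)]; exact Submodule.mem_top
          refine ⟨0, by rw [map_zero], ⟨e ▸ (-w), hmem2⟩, Subtype.ext ?_⟩
          show (0 : K.X p) - y.1 = ((K.d (p - 1) p).hom : K.X (p - 1) →ₗ[R] K.X p) (e ▸ (-w))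
          rw [cast_apply_d K e p (-w), map_neg, hw]
          abel
        · have heq : tau K i p = ⊥ := by
            rw [tau, if_neg h1, if_neg h2]
          have hy0 : y.1 = 0 := (Submodule.mem_bot _).1 (heq.le y.2)
          refine ⟨0, by rw [map_zero], 0, Subtype.ext ?_⟩
          show (0 : K.X p) - y.1 = ((K.d (p - 1) p).hom : K.X (p - 1) →ₗ[R] K.X p) 0
          rw [hy0, map_zero, sub_zero]
    · -- injectivity on cohomology
      rintro x hx ⟨c, hc⟩
      have hc' : x.1 = ((K.d (p - 1) p).hom : K.X (p - 1) →ₗ[R] K.X p) c.1 :=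
        congrArg Subtype.val hc
      by_cases h1 : p ≤ -i
      · have heq : tauN K N i p = N i p := by rw [tauN, if_pos h1]
        have hxm : x.1 ∈ N i p := heq.le x.2
        have hQ := hB i (p - 1) (by omega) c.1
        rw [show p - 1 + 1 = p by omega] at hQ
        obtain ⟨z, hz⟩ := hQ (by rw [← hc']; exact hxm)
        have hmem : c.1 - ((K.d (p - 1 - 1) (p - 1)).hom : K.X (p - 1 - 1) →ₗ[R] K.X (p - 1)) z
            ∈ tauN K N i (p - 1) := by
          rw [tauN, if_pos (show p - 1 ≤ -i by omega)]; exact hz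
        refine ⟨⟨_, hmem⟩, Subtype.ext ?_⟩
        show x.1 = ((K.d (p - 1) p).hom : K.X (p - 1) →ₗ[R] K.X p)
          (c.1 - ((K.d (p - 1 - 1) (p - 1)).hom : K.X (p - 1 - 1) →ₗ[R] K.X (p - 1)) z)
        rw [map_sub, d_d_zero, sub_zero, hc']
      · by_cases h2 : p = -i + 1
        · have heq : tauN K N i p =
              Submodule.map ((K.d (-i) p).hom : K.X (-i) →ₗ[R] K.X p) (N i (-i)) := by
            rw [tauN, if_neg h1, if_pos h2]
          obtain ⟨w, hwN, hw⟩ := heq.le x.2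
          have e : (-i : ℤ) = p - 1 := by omega
          have hmem2 : (e ▸ w : K.X (p - 1)) ∈ tauN K N i (p - 1) := by
            rw [tauN, if_pos (show p - 1 ≤ -i by omega)]
            exact cast_mem K e (N i) hwN
          refine ⟨⟨e ▸ w, hmem2⟩, Subtype.ext ?_⟩
          show x.1 = ((K.d (p - 1) p).hom : K.X (p - 1) →ₗ[R] K.X p) (e ▸ w)
          rw [cast_apply_d K e p w]
          exact hw.symm
        · have heq : tauN K N i p = ⊥ := by rw [tauN, if_neg h1, if_neg h2]
          have hx0 : x.1 = 0 := (Submodule.mem_bot _).1 (heq.le x.2)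
          exact ⟨0, by rw [map_zero]; exact Subtype.ext hx0⟩

end FilteredTruncation
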